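/- Let m ≤ n be positive integers. Then the m×(n,m,m) triple (F_{mn}, 0_m, 0_m) is rigid with respect to feedback similarity, and every m×(n,m,m) triple that is rigid with respect to feedback similarity is feedback similar to (F_{mn}, 0_m, 0_m). -/
import Mathlib


open Matrix

/-- An `m×(n,m)` pair: a pair `(B, A)` with `B ∈ ℂ^{m×n}` and `A ∈ ℂ^{m×m}`. -/
abbrev PairT (m n : ℕ) :=
  Matrix (Fin m) (Fin n) ℂ × Matrix (Fin m) (Fin m) ℂ

/-- Feedback similarity of `m×(n,m)` pairs: `(B,A)` and `(B',A')` are feedback similar if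
`B' = S⁻¹BP` and `A' = S⁻¹(AS + BU)` for some invertible `S, P` and some `U`. -/
def FSP {m n : ℕ} (X Y : PairT m n) : Prop :=
  ∃ (S : Matrix (Fin m) (Fin m) ℂ) (P : Matrix (Fin n) (Fin n) ℂ)
    (U : Matrix (Fin n) (Fin m) ℂ),
    IsUnit S ∧ IsUnit P ∧ Y.1 = S⁻¹ * X.1 * P ∧ Y.2 = S⁻¹ * (X.2 * S + X.1 * U)

/-- An `m×(n,m,m)` triple: a triple `(C, B, A)` with `C ∈ ℂ^{m×n}` and `B, A ∈ ℂ^{m×m}`. -/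
abbrev TripleT (m n : ℕ) :=
  Matrix (Fin m) (Fin n) ℂ × Matrix (Fin m) (Fin m) ℂ × Matrix (Fin m) (Fin m) ℂ

/-- Feedback similarity of `m×(n,m,m)` triples: `(C,B,A)` and `(C',B',A')` are feedback
similar if `C' = S⁻¹CP`, `B' = S⁻¹(BS + CV)`, `A' = S⁻¹(AS + CU)` for some invertible
`S, P` and some `U, V`. -/
def FST {m n : ℕ} (X Y : TripleT m n) : Prop :=
  ∃ (S : Matrix (Fin m) (Fin m) ℂ) (P : Matrix (Fin n) (Fin n) ℂ)
    (U V : Matrix (Fin n) (Fin m) ℂ),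
    IsUnit S ∧ IsUnit P ∧ Y.1 = S⁻¹ * X.1 * P ∧
    Y.2.1 = S⁻¹ * (X.2.1 * S + X.1 * V) ∧ Y.2.2 = S⁻¹ * (X.2.2 * S + X.1 * U)

/-- Frobenius norm of a complex matrix. -/
noncomputable def fnorm {p q : ℕ} (M : Matrix (Fin p) (Fin q) ℂ) : ℝ :=
  Real.sqrt (∑ i, ∑ j, ‖M i j‖ ^ 2)

/-- Norm of a pair: `‖(B,A)‖ = ‖B‖ + ‖A‖`. -/
noncomputable def pnorm {m n : ℕ} (X : PairT m n) : ℝ := fnorm X.1 + fnorm X.2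

/-- Norm of a triple: `‖(C,B,A)‖ = ‖C‖ + ‖B‖ + ‖A‖`. -/
noncomputable def tnorm {m n : ℕ} (X : TripleT m n) : ℝ :=
  fnorm X.1 + fnorm X.2.1 + fnorm X.2.2

/-- `F_{mn} = [I_m 0_{m,n-m}]` (for `m ≤ n`), entrywise: entry 1 iff `i = j`. -/
def Fmat (m n : ℕ) : Matrix (Fin m) (Fin n) ℂ := fun i j =>
  if (i:ℕ) = (j:ℕ) then 1 else 0

/-- A triple is rigid with respect to feedback similarity if all triples in some
`ε`-neighbourhood of it are feedback similar to it. -/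
def RigidT {m n : ℕ} (X : TripleT m n) : Prop :=
  ∃ ε : ℝ, 0 < ε ∧ ∀ Y : TripleT m n, tnorm (Y - X) < ε → FST Y X


section aux

variable {m n p q : ℕ}

lemma fnorm_nonneg (M : Matrix (Fin p) (Fin q) ℂ) : 0 ≤ fnorm M := Real.sqrt_nonneg _

lemma entry_le_fnorm (M : Matrix (Fin p) (Fin q) ℂ) (i : Fin p) (j : Fin q) :
    ‖M i j‖ ≤ fnorm M := by
  have h1 : ‖M i j‖ ^ 2 ≤ ∑ i', ∑ j', ‖M i' j'‖ ^ 2 := by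
    calc ‖M i j‖ ^ 2 ≤ ∑ j', ‖M i j'‖ ^ 2 :=
          Finset.single_le_sum (f := fun j' => ‖M i j'‖ ^ 2) (fun _ _ => sq_nonneg _) (Finset.mem_univ j)
      _ ≤ ∑ i', ∑ j', ‖M i' j'‖ ^ 2 :=
          Finset.single_le_sum (f := fun i' => ∑ j', ‖M i' j'‖ ^ 2)
            (fun _ _ => Finset.sum_nonneg fun _ _ => sq_nonneg _) (Finset.mem_univ i)
  calc ‖M i j‖ = Real.sqrt (‖M i j‖ ^ 2) := (Real.sqrt_sq (norm_nonneg _)).symm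
    _ ≤ fnorm M := Real.sqrt_le_sqrt h1

lemma fnorm_smul (t : ℂ) (M : Matrix (Fin p) (Fin q) ℂ) :
    fnorm (t • M) = ‖t‖ * fnorm M := by
  unfold fnorm
  have h : ∀ i j, ‖(t • M) i j‖ ^ 2 = ‖t‖ ^ 2 * ‖M i j‖ ^ 2 := by
    intro i j
    rw [Matrix.smul_apply, norm_smul]
    ring
  simp_rw [h, ← Finset.mul_sum]
  rw [Real.sqrt_mul (sq_nonneg _), Real.sqrt_sq (norm_nonneg _)]

lemma fnorm_zero : fnorm (0 : Matrix (Fin p) (Fin q) ℂ) = 0 := by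
  unfold fnorm; simp

lemma sum_dite_lt (hmn : m ≤ n) (g : Fin m → ℂ) :
    ∑ j : Fin n, (if h : (j : ℕ) < m then g ⟨j, h⟩ else 0) = ∑ j : Fin m, g j := by
  have h1 : ∀ j : Fin m, g j = if h : (j : ℕ) < m then g ⟨j, h⟩ else 0 := by
    intro j; rw [dif_pos j.2]
  rw [Finset.sum_congr rfl fun j _ => h1 j]
  rw [Fin.sum_univ_eq_sum_range (fun j => if h : j < m then g ⟨j, h⟩ else 0) n]
  rw [Fin.sum_univ_eq_sum_range (fun j => if h : j < m then g ⟨j, h⟩ else 0) m]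
  refine (Finset.sum_subset (Finset.range_subset_range.2 hmn) ?_).symm
  intro x _ hx
  rw [Finset.mem_range] at hx
  rw [dif_neg hx]

end aux

section main

variable {m n : ℕ}

lemma fst_of_blk (hmn : m ≤ n) (C : Matrix (Fin m) (Fin n) ℂ)
    (B A : Matrix (Fin m) (Fin m) ℂ)
    (hS : IsUnit (Matrix.of fun i (j : Fin m) => C i (Fin.castLE hmn j))) :
    FST (C, B, A) (Fmat m n, 0, 0) := by
  set S : Matrix (Fin m) (Fin m) ℂ := Matrix.of fun i (j : Fin m) => C i (Fin.castLE hmn j)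
    with hSdef
  have hdet : IsUnit S.det := (Matrix.isUnit_iff_isUnit_det S).mp hS
  set G : Matrix (Fin m) (Fin n) ℂ := S⁻¹ * C with hGdef
  have Gblk : ∀ (i : Fin m) (k : Fin m),
      G i (Fin.castLE hmn k) = (1 : Matrix (Fin m) (Fin m) ℂ) i k := by
    intro i k
    have h1 : G i (Fin.castLE hmn k) = (S⁻¹ * S) i k := by
      simp [hGdef, hSdef, Matrix.mul_apply]
    rw [h1, Matrix.nonsing_inv_mul _ hdet]
  set E : Matrix (Fin n) (Fin n) ℂ :=
    Matrix.of (fun i j => if h : (i : ℕ) < m ∧ ¬ ((j : ℕ) < m) then G ⟨(i : ℕ), h.1⟩ j else 0)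
    with hEdef
  have hEE : E * E = 0 := by
    ext i j
    rw [Matrix.mul_apply, Matrix.zero_apply]
    refine Finset.sum_eq_zero fun k _ => ?_
    by_cases hk : (k : ℕ) < m
    · have : E i k = 0 := by simp [hEdef, hk]
      rw [this, zero_mul]
    · have : E k j = 0 := by simp [hEdef, hk]
      rw [this, mul_zero]
  have h1 : (1 - E) * (1 + E) = 1 - E * E := by noncomm_ring
  have h2 : (1 + E) * (1 - E) = 1 - E * E := by noncomm_ring
  have hPunit : IsUnit (1 - E) :=
    ⟨⟨1 - E, 1 + E, by rw [h1, hEE, sub_zero], by rw [h2, hEE, sub_zero]⟩, rfl⟩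
  have hGE : ∀ (i : Fin m) (j : Fin n), ¬ ((j : ℕ) < m) → (G * E) i j = G i j := by
    intro i j hj
    rw [Matrix.mul_apply]
    have hterm : ∀ k : Fin n, G i k * E k j =
        if h : (k : ℕ) < m then
          (fun k' : Fin m => G i (Fin.castLE hmn k') * G k' j) ⟨(k : ℕ), h⟩ else 0 := by
      intro k
      by_cases h : (k : ℕ) < m
      · rw [dif_pos h]
        have hk : Fin.castLE hmn ⟨(k : ℕ), h⟩ = k := by
          apply Fin.ext; rfl
        have hE : E k j = G ⟨(k : ℕ), h⟩ j := by
          simp only [hEdef, Matrix.of_apply]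
          rw [dif_pos ⟨h, hj⟩]
        rw [hE]
        show G i k * G ⟨(k : ℕ), h⟩ j = G i (Fin.castLE hmn ⟨(k : ℕ), h⟩) * G ⟨(k : ℕ), h⟩ j
        rw [hk]
      · rw [dif_neg h]
        have hE : E k j = 0 := by simp [hEdef, h]
        rw [hE, mul_zero]
    rw [Finset.sum_congr rfl fun k _ => hterm k,
      sum_dite_lt hmn (fun k' : Fin m => G i (Fin.castLE hmn k') * G k' j)]
    have : ∀ k' : Fin m, G i (Fin.castLE hmn k') * G k' j =
        (if i = k' then (1 : ℂ) else 0) * G k' j := by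
      intro k'; rw [Gblk i k', Matrix.one_apply]
    rw [Finset.sum_congr rfl fun k _ => this k]
    simp
  have hGP : G * (1 - E) = Fmat m n := by
    rw [Matrix.mul_sub, Matrix.mul_one]
    ext i j
    rw [Matrix.sub_apply]
    by_cases hj : (j : ℕ) < m
    · have hE0 : (G * E) i j = 0 := by
        rw [Matrix.mul_apply]
        refine Finset.sum_eq_zero fun k _ => ?_
        have : E k j = 0 := by simp [hEdef, hj]
        rw [this, mul_zero]
      rw [hE0, sub_zero]
      have hk : Fin.castLE hmn ⟨(j : ℕ), hj⟩ = j := by apply Fin.ext; rfl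
      have := Gblk i ⟨(j : ℕ), hj⟩
      rw [hk] at this
      rw [this, Matrix.one_apply, Fmat]
      simp [Fin.ext_iff]
    · rw [hGE i j hj, sub_self, Fmat]
      have : ¬ ((i : ℕ) = (j : ℕ)) := by
        intro h; exact hj (h ▸ i.2)
      simp [this]
  -- right inverse of G
  set D : Matrix (Fin n) (Fin m) ℂ :=
    Matrix.of (fun (j : Fin n) (k : Fin m) => if (j : ℕ) = (k : ℕ) then (1 : ℂ) else 0)
    with hDdef
  have hGD : G * D = 1 := by
    ext i k
    rw [Matrix.mul_apply]
    rw [Finset.sum_eq_single (Fin.castLE hmn k)]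
    · have : D (Fin.castLE hmn k) k = 1 := by simp [hDdef]
      rw [this, mul_one, Gblk]
    · intro b _ hb
      have : D b k = 0 := by
        simp only [hDdef, Matrix.of_apply]
        rw [if_neg]
        intro h
        exact hb (Fin.ext h)
      rw [this, mul_zero]
    · intro h; exact absurd (Finset.mem_univ _) h
  have hC : S * G = C := by
    rw [hGdef, ← Matrix.mul_assoc, Matrix.mul_nonsing_inv _ hdet, Matrix.one_mul]
  have hCD : C * D = S := by
    rw [← hC, Matrix.mul_assoc, hGD, Matrix.mul_one]
  have key : ∀ W : Matrix (Fin m) (Fin m) ℂ,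
      W * S + C * (-(D * (S⁻¹ * (W * S)))) = 0 := by
    intro W
    rw [Matrix.mul_neg, ← Matrix.mul_assoc, hCD, ← Matrix.mul_assoc,
      Matrix.mul_nonsing_inv _ hdet, Matrix.one_mul, add_neg_cancel]
  refine ⟨S, 1 - E, -(D * (S⁻¹ * (A * S))), -(D * (S⁻¹ * (B * S))), hS, hPunit, ?_, ?_, ?_⟩
  · show Fmat m n = S⁻¹ * C * (1 - E)
    rw [← hGdef, hGP]
  · show (0 : Matrix (Fin m) (Fin m) ℂ) = S⁻¹ * (B * S + C * (-(D * (S⁻¹ * (B * S)))))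
    rw [key B, Matrix.mul_zero]
  · show (0 : Matrix (Fin m) (Fin m) ℂ) = S⁻¹ * (A * S + C * (-(D * (S⁻¹ * (A * S)))))
    rw [key A, Matrix.mul_zero]

end main
section part2

variable {m n : ℕ}

lemma FST_symm {X Y : TripleT m n} (h : FST X Y) : FST Y X := by
  obtain ⟨S, P, U, V, hS, hP, h1, h2, h3⟩ := h
  have hdS : IsUnit S.det := (Matrix.isUnit_iff_isUnit_det S).mp hS
  have hdP : IsUnit P.det := (Matrix.isUnit_iff_isUnit_det P).mp hP
  haveI := S.invertibleOfIsUnitDet hdS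
  haveI := P.invertibleOfIsUnitDet hdP
  refine ⟨S⁻¹, P⁻¹, -(P⁻¹ * (U * S⁻¹)), -(P⁻¹ * (V * S⁻¹)),
    (Matrix.isUnit_nonsing_inv_iff).mpr hS, (Matrix.isUnit_nonsing_inv_iff).mpr hP, ?_, ?_, ?_⟩
  · rw [Matrix.inv_inv_of_invertible, h1]
    simp only [Matrix.mul_assoc, Matrix.mul_inv_cancel_left_of_invertible,
      Matrix.inv_mul_cancel_left_of_invertible, Matrix.mul_inv_of_invertible, Matrix.mul_one]
  · rw [Matrix.inv_inv_of_invertible, h2, h1]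
    simp only [Matrix.mul_add, Matrix.add_mul, Matrix.mul_neg, Matrix.neg_mul,
      Matrix.mul_assoc, Matrix.mul_inv_cancel_left_of_invertible,
      Matrix.inv_mul_cancel_left_of_invertible, Matrix.mul_inv_of_invertible,
      Matrix.inv_mul_of_invertible, Matrix.mul_one, Matrix.one_mul]
    abel
  · rw [Matrix.inv_inv_of_invertible, h3, h1]
    simp only [Matrix.mul_add, Matrix.add_mul, Matrix.mul_neg, Matrix.neg_mul,
      Matrix.mul_assoc, Matrix.mul_inv_cancel_left_of_invertible,
      Matrix.inv_mul_cancel_left_of_invertible, Matrix.mul_inv_of_invertible,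
      Matrix.inv_mul_of_invertible, Matrix.mul_one, Matrix.one_mul]
    abel

lemma FST_trans {X Y Z : TripleT m n} (hxy : FST X Y) (hyz : FST Y Z) : FST X Z := by
  obtain ⟨S1, P1, U1, V1, hS1, hP1, e1, e2, e3⟩ := hxy
  obtain ⟨S2, P2, U2, V2, hS2, hP2, f1, f2, f3⟩ := hyz
  refine ⟨S1 * S2, P1 * P2, U1 * S2 + P1 * U2, V1 * S2 + P1 * V2,
    hS1.mul hS2, hP1.mul hP2, ?_, ?_, ?_⟩
  · rw [f1, e1, Matrix.mul_inv_rev]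
    simp only [Matrix.mul_assoc]
  · rw [f2, e2, e1, Matrix.mul_inv_rev]
    simp only [Matrix.mul_add, Matrix.add_mul, Matrix.mul_assoc]
    abel
  · rw [f3, e3, e1, Matrix.mul_inv_rev]
    simp only [Matrix.mul_add, Matrix.add_mul, Matrix.mul_assoc]
    abel

lemma exists_delta (hmn : m ≤ n) :
    ∃ δ : ℝ, 0 < δ ∧ ∀ C : Matrix (Fin m) (Fin n) ℂ,
      (∀ i j, ‖C i j - Fmat m n i j‖ < δ) →
      IsUnit (Matrix.of fun i (j : Fin m) => C i (Fin.castLE hmn j)) := by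
  have hcont : Continuous (fun C : Fin m → Fin n → ℂ =>
      Matrix.det (Matrix.of fun i (j : Fin m) => C i (Fin.castLE hmn j))) := by
    apply Continuous.matrix_det
    apply continuous_matrix
    intro i j
    exact (continuous_apply (Fin.castLE hmn j)).comp (continuous_apply i)
  have hF : (Matrix.of fun i (j : Fin m) => Fmat m n i (Fin.castLE hmn j))
      = (1 : Matrix (Fin m) (Fin m) ℂ) := by
    ext i j
    simp [Fmat, Matrix.one_apply, Fin.ext_iff]
  have h1 := hcont.continuousAt (x := fun i j => Fmat m n i j)
  rw [Metric.continuousAt_iff] at h1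
  obtain ⟨δ, hδ, hball⟩ := h1 1 one_pos
  refine ⟨δ, hδ, fun C hC => ?_⟩
  have hdist : dist (fun i j => C i j) (fun i j => Fmat m n i j) < δ := by
    rw [dist_pi_lt_iff hδ]
    intro i
    rw [dist_pi_lt_iff hδ]
    intro j
    rw [Complex.dist_eq]
    exact hC i j
  have h2 := hball hdist
  have h3 : (Matrix.of fun i (j : Fin m) => (fun i j => Fmat m n i j) i (Fin.castLE hmn j))
      = (1 : Matrix (Fin m) (Fin m) ℂ) := hF
  rw [h3] at h2
  rw [Matrix.det_one] at h2
  have hne : Matrix.det (Matrix.of fun i (j : Fin m) => C i (Fin.castLE hmn j)) ≠ 0 := by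
    intro h0
    rw [show (Matrix.of fun i (j : Fin m) => (fun i j => C i j) i (Fin.castLE hmn j))
      = (Matrix.of fun i (j : Fin m) => C i (Fin.castLE hmn j)) from rfl, h0] at h2
    simp [Complex.dist_eq] at h2
  exact (Matrix.isUnit_iff_isUnit_det _).mpr (isUnit_iff_ne_zero.mpr hne)

lemma charpoly_eval (M : Matrix (Fin m) (Fin m) ℂ) (t : ℂ) :
    M.charpoly.eval t = (t • (1 : Matrix (Fin m) (Fin m) ℂ) - M).det := by
  rw [Matrix.charpoly]
  have h1 : Polynomial.eval t (Matrix.charmatrix M).det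
      = (Polynomial.evalRingHom t) (Matrix.charmatrix M).det := rfl
  rw [h1, RingHom.map_det]
  congr 1
  ext i j
  by_cases h : i = j
  · subst h
    simp [Matrix.charmatrix_apply_eq, Matrix.one_apply]
  · simp [Matrix.charmatrix_apply_ne _ _ _ h, Matrix.one_apply, h]

lemma exists_perturb (M : Matrix (Fin m) (Fin m) ℂ) {δ : ℝ} (hδ : 0 < δ) :
    ∃ t : ℂ, ‖t‖ < δ ∧ IsUnit (M + t • 1) := by
  set q := (-M).charpoly with hq
  have hqne : q ≠ 0 := (Matrix.charpoly_monic _).ne_zero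
  have hfin : {x : ℂ | q.IsRoot x}.Finite := Polynomial.finite_setOf_isRoot hqne
  have hinf : ((fun r : ℝ => (r : ℂ)) '' Set.Ioo 0 δ).Infinite := by
    apply Set.Infinite.image
    · exact Complex.ofReal_injective.injOn
    · exact Set.infinite_coe_iff.mp (Set.Ioo.infinite hδ)
  obtain ⟨t, htS, htR⟩ := (hinf.diff hfin).nonempty
  obtain ⟨r, hr, hrt⟩ := htS
  refine ⟨t, ?_, ?_⟩
  · rw [← hrt]
    simp only [Complex.norm_real]
    rw [Real.norm_eq_abs, abs_of_pos hr.1]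
    exact hr.2
  · have heval : q.eval t = (M + t • 1).det := by
      rw [hq, charpoly_eval, sub_neg_eq_add, add_comm]
    have : q.eval t ≠ 0 := htR
    rw [heval] at this
    exact (Matrix.isUnit_iff_isUnit_det _).mpr (isUnit_iff_ne_zero.mpr this)

end part2

/-- for `m ≤ n`, the triple `(F_{mn}, 0_m, 0_m)` is rigid, and every
rigid `m×(n,m,m)` triple is feedback similar to it. -/
theorem stmt16 (m n : ℕ) (hm : 1 ≤ m) (hmn : m ≤ n) :
    RigidT ((Fmat m n, 0, 0) : TripleT m n) ∧
    ∀ T : TripleT m n, RigidT T → FST T (Fmat m n, 0, 0) := by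
  constructor
  · obtain ⟨δ, hδ, hiu⟩ := exists_delta hmn
    refine ⟨δ, hδ, ?_⟩
    rintro ⟨C, B, A⟩ hY
    have hsub : tnorm (((C, B, A) : TripleT m n) - (Fmat m n, 0, 0)) =
        fnorm (C - Fmat m n) + fnorm B + fnorm A := by
      simp [tnorm, Prod.fst_sub, Prod.snd_sub, sub_zero]
    have hent : ∀ i j, ‖C i j - Fmat m n i j‖ < δ := by
      intro i j
      have h1 : ‖(C - Fmat m n) i j‖ ≤ fnorm (C - Fmat m n) := entry_le_fnorm _ i j
      have hB := fnorm_nonneg B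
      have hA := fnorm_nonneg A
      have h2 : fnorm (C - Fmat m n) ≤
          tnorm (((C, B, A) : TripleT m n) - (Fmat m n, 0, 0)) := by
        rw [hsub]; linarith
      have h3 := lt_of_le_of_lt (h1.trans h2) hY
      simpa [Matrix.sub_apply] using h3
    exact fst_of_blk hmn C B A (hiu C hent)
  · intro T hT
    obtain ⟨ε, hε, hrig⟩ := hT
    set K := fnorm (Fmat m n) with hK
    have hK0 : 0 ≤ K := fnorm_nonneg _
    have hδ : 0 < ε / (K + 1) := div_pos hε (by linarith)
    obtain ⟨t, ht, hunit⟩ := exists_perturb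
      (Matrix.of fun i (j : Fin m) => T.1 i (Fin.castLE hmn j)) hδ
    set Y : TripleT m n := (T.1 + t • Fmat m n, T.2.1, T.2.2) with hYdef
    have hblk : (Matrix.of fun i (j : Fin m) => Y.1 i (Fin.castLE hmn j))
        = (Matrix.of fun i (j : Fin m) => T.1 i (Fin.castLE hmn j)) + t • 1 := by
      ext i j
      simp [hYdef, Fmat, Matrix.one_apply, Fin.ext_iff, Matrix.add_apply,
        Matrix.smul_apply, smul_eq_mul]
    have hYT : FST Y T := by
      apply hrig
      have hsub : Y - T = ((t • Fmat m n, 0, 0) : TripleT m n) := by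
        rw [hYdef]
        ext i j <;> simp
      rw [hsub]
      have htn : tnorm ((t • Fmat m n, 0, 0) : TripleT m n) = ‖t‖ * K := by
        simp [tnorm, fnorm_zero, fnorm_smul, hK]
      rw [htn]
      calc ‖t‖ * K ≤ ‖t‖ * (K + 1) :=
            mul_le_mul_of_nonneg_left (by linarith) (norm_nonneg t)
        _ < (ε / (K + 1)) * (K + 1) := mul_lt_mul_of_pos_right ht (by linarith)
        _ = ε := by field_simp
    have hYF : FST Y (Fmat m n, 0, 0) := by
      have h := fst_of_blk hmn Y.1 Y.2.1 Y.2.2 (by rw [hblk]; exact hunit)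
      exact h
    exact FST_trans (FST_symm hYT) hYF
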